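/- For a continuous function g : [0,1] → [0,∞), the kernel m_g(s,t) = inf_{r∈[s∧t,s∨t]} g(r) is nonnegative definite: for every n ≥ 1, every s_1, ..., s_n ∈ [0,1] and every λ_1, ..., λ_n ∈ ℝ, ∑_{i,j} λ_i λ_j m_g(s_i, s_j) ≥ 0. -/
import Mathlib


open Set

/-- `m_g(s,t) = inf_{r ∈ [s∧t, s∨t]} g(r)`. -/
noncomputable def mOf (g : ℝ → ℝ) (s t : ℝ) : ℝ := sInf (g '' Icc (min s t) (max s t))

lemma quad_nonneg {α : Type*} [DecidableEq α] (l : α → ℝ) :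
    ∀ (N : ℕ) (A : Finset α), A.card ≤ N → ∀ (m : α → α → ℝ),
    (∀ i ∈ A, ∀ j ∈ A, m i j = m j i) →
    (∀ i ∈ A, ∀ j ∈ A, 0 ≤ m i j) →
    (∀ i ∈ A, ∀ j ∈ A, m i j ≤ m i i) →
    (∀ i ∈ A, ∀ j ∈ A, ∀ k ∈ A, min (m i k) (m k j) ≤ m i j) →
    0 ≤ ∑ i ∈ A, ∑ j ∈ A, l i * l j * m i j := by
  intro N
  induction N with
  | zero =>
    intro A hA m _ _ _ _
    rw [Nat.le_zero, Finset.card_eq_zero] at hA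
    simp [hA]
  | succ N IH =>
    intro A hA m hsymm hnn hdiag hultra
    rcases A.eq_empty_or_nonempty with rfl | hAne
    · simp
    -- c is the minimum entry of the matrix over A × A
    have hPne : (A ×ˢ A).Nonempty := hAne.product hAne
    obtain ⟨⟨i0, j0⟩, hp, hpe⟩ := Finset.exists_mem_eq_inf' hPne (fun p => m p.1 p.2)
    obtain ⟨hi0, hj0⟩ := Finset.mem_product.1 hp
    set c : ℝ := (A ×ˢ A).inf' hPne (fun p => m p.1 p.2) with hc
    have hcle : ∀ i ∈ A, ∀ j ∈ A, c ≤ m i j := by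
      intro i hi j hj
      rw [hc]
      exact Finset.inf'_le (fun p => m p.1 p.2)
        (show ((i, j) : _ × _) ∈ A ×ˢ A from Finset.mem_product.2 ⟨hi, hj⟩)
    have hc0 : 0 ≤ c := by rw [hpe]; exact hnn i0 hi0 j0 hj0
    set m' : α → α → ℝ := fun i j => m i j - c with hm'
    -- properties of m' on any subset of A
    have hsymm' : ∀ i ∈ A, ∀ j ∈ A, m' i j = m' j i := by
      intro i hi j hj; simp only [hm']; rw [hsymm i hi j hj]
    have hnn' : ∀ i ∈ A, ∀ j ∈ A, 0 ≤ m' i j := by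
      intro i hi j hj; simp only [hm', sub_nonneg]; exact hcle i hi j hj
    have hdiag' : ∀ i ∈ A, ∀ j ∈ A, m' i j ≤ m' i i := by
      intro i hi j hj; exact sub_le_sub_right (hdiag i hi j hj) c
    have hultra' : ∀ i ∈ A, ∀ j ∈ A, ∀ k ∈ A, min (m' i k) (m' k j) ≤ m' i j := by
      intro i hi j hj k hk
      simp only [hm', min_sub_sub_right]
      exact sub_le_sub_right (hultra i hi j hj k hk) c
    -- split the quadratic form
    have hsplit : ∑ i ∈ A, ∑ j ∈ A, l i * l j * m i j
        = (∑ i ∈ A, ∑ j ∈ A, l i * l j * m' i j)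
          + c * ((∑ i ∈ A, l i) * (∑ i ∈ A, l i)) := by
      rw [Finset.sum_mul_sum, Finset.mul_sum, ← Finset.sum_add_distrib]
      refine Finset.sum_congr rfl fun i _ => ?_
      rw [Finset.mul_sum, ← Finset.sum_add_distrib]
      refine Finset.sum_congr rfl fun j _ => ?_
      simp only [hm']; ring
    rw [hsplit]
    have hsq : 0 ≤ c * ((∑ i ∈ A, l i) * (∑ i ∈ A, l i)) :=
      mul_nonneg hc0 (mul_self_nonneg _)
    refine add_nonneg ?_ hsq
    -- case on whether some diagonal entry of m' vanishes
    by_cases hZ : ∃ i0 ∈ A, m' i0 i0 = 0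
    · clear hpe hp hi0 hj0
      obtain ⟨i0, hi0, hdi0⟩ := hZ
      have hrow : ∀ j ∈ A, m' i0 j = 0 := by
        intro j hj
        exact le_antisymm (hdi0 ▸ hdiag' i0 hi0 j hj) (hnn' i0 hi0 j hj)
      have hcol : ∀ j ∈ A, m' j i0 = 0 := by
        intro j hj; rw [← hsymm' i0 hi0 j hj]; exact hrow j hj
      have hAcard : (A.erase i0).card ≤ N := by
        have := Finset.card_erase_of_mem hi0
        omega
      have hsub : A.erase i0 ⊆ A := Finset.erase_subset _ _
      have hEq : ∑ i ∈ A, ∑ j ∈ A, l i * l j * m' i j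
          = ∑ i ∈ A.erase i0, ∑ j ∈ A.erase i0, l i * l j * m' i j := by
        rw [← Finset.add_sum_erase A _ hi0]
        have h1 : ∑ j ∈ A, l i0 * l j * m' i0 j = 0 :=
          Finset.sum_eq_zero fun j hj => by rw [hrow j hj, mul_zero]
        rw [h1, zero_add]
        refine Finset.sum_congr rfl fun i hi => ?_
        rw [← Finset.add_sum_erase A _ hi0]
        rw [hcol i (hsub hi), mul_zero, zero_add]
      rw [hEq]
      exact IH (A.erase i0) hAcard m'
        (fun i hi j hj => hsymm' i (hsub hi) j (hsub hj))
        (fun i hi j hj => hnn' i (hsub hi) j (hsub hj))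
        (fun i hi j hj => hdiag' i (hsub hi) j (hsub hj))
        (fun i hi j hj k hk => hultra' i (hsub hi) j (hsub hj) k (hsub hk))
    · push_neg at hZ
      have hdpos : ∀ i ∈ A, 0 < m' i i := fun i hi =>
        lt_of_le_of_ne (hnn' i hi i hi) (Ne.symm (hZ i hi))
      have hm'0 : m' i0 j0 = 0 := by
        show m i0 j0 - c = 0
        rw [hpe, sub_self]
      set B : Finset α := A.filter (fun i => 0 < m' i i0) with hB
      set C : Finset α := A.filter (fun i => ¬ 0 < m' i i0) with hC
      have hBsub : B ⊆ A := Finset.filter_subset _ _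
      have hCsub : C ⊆ A := Finset.filter_subset _ _
      have hi0B : i0 ∈ B := Finset.mem_filter.2 ⟨hi0, hdpos i0 hi0⟩
      have hj0C : j0 ∈ C := by
        refine Finset.mem_filter.2 ⟨hj0, ?_⟩
        rw [hsymm' j0 hj0 i0 hi0, hm'0]
        exact lt_irrefl 0
      have hi0nC : i0 ∉ C := fun h => (Finset.mem_filter.1 h).2 (hdpos i0 hi0)
      have hj0nB : j0 ∉ B := fun h => by
        have := (Finset.mem_filter.1 h).2
        rw [hsymm' j0 hj0 i0 hi0, hm'0] at this
        exact lt_irrefl 0 this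
      -- cross entries vanish
      have hcross : ∀ i ∈ B, ∀ j ∈ C, m' i j = 0 := by
        intro i hi j hj
        obtain ⟨hiA, hiB⟩ := Finset.mem_filter.1 hi
        obtain ⟨hjA, hjC⟩ := Finset.mem_filter.1 hj
        by_contra h
        have hpos' : 0 < m' i j := lt_of_le_of_ne (hnn' i hiA j hjA) (Ne.symm h)
        apply hjC
        calc (0:ℝ) < min (m' j i) (m' i i0) := by
              rw [hsymm' j hjA i hiA]
              exact lt_min hpos' hiB
          _ ≤ m' j i0 := hultra' j hjA i0 hi0 i hiA
      have hcross' : ∀ i ∈ C, ∀ j ∈ B, m' i j = 0 := by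
        intro i hi j hj
        rw [hsymm' i (hCsub hi) j (hBsub hj)]
        exact hcross j hj i hi
      -- split sum
      have hEq : ∑ i ∈ A, ∑ j ∈ A, l i * l j * m' i j
          = (∑ i ∈ B, ∑ j ∈ B, l i * l j * m' i j)
            + ∑ i ∈ C, ∑ j ∈ C, l i * l j * m' i j := by
        rw [← Finset.sum_filter_add_sum_filter_not A (fun i => 0 < m' i i0)]
        congr 1
        · refine Finset.sum_congr rfl fun i hi => ?_
          rw [← Finset.sum_filter_add_sum_filter_not A (fun j => 0 < m' j i0)]
          have : ∑ j ∈ C, l i * l j * m' i j = 0 :=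
            Finset.sum_eq_zero fun j hj => by rw [hcross i hi j hj, mul_zero]
          rw [this, add_zero]
        · refine Finset.sum_congr rfl fun i hi => ?_
          rw [← Finset.sum_filter_add_sum_filter_not A (fun j => 0 < m' j i0)]
          have : ∑ j ∈ B, l i * l j * m' i j = 0 :=
            Finset.sum_eq_zero fun j hj => by rw [hcross' i hi j hj, mul_zero]
          rw [this, zero_add]
      rw [hEq]
      have hBcard : B.card ≤ N := by
        have h1 : B ⊂ A := Finset.ssubset_iff_of_subset hBsub |>.2 ⟨j0, hj0, hj0nB⟩
        have := Finset.card_lt_card h1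
        omega
      have hCcard : C.card ≤ N := by
        have h1 : C ⊂ A := Finset.ssubset_iff_of_subset hCsub |>.2 ⟨i0, hi0, hi0nC⟩
        have := Finset.card_lt_card h1
        omega
      refine add_nonneg ?_ ?_
      · exact IH B hBcard m'
          (fun i hi j hj => hsymm' i (hBsub hi) j (hBsub hj))
          (fun i hi j hj => hnn' i (hBsub hi) j (hBsub hj))
          (fun i hi j hj => hdiag' i (hBsub hi) j (hBsub hj))
          (fun i hi j hj k hk => hultra' i (hBsub hi) j (hBsub hj) k (hBsub hk))
      · exact IH C hCcard m'
          (fun i hi j hj => hsymm' i (hCsub hi) j (hCsub hj))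
          (fun i hi j hj => hnn' i (hCsub hi) j (hCsub hj))
          (fun i hi j hj => hdiag' i (hCsub hi) j (hCsub hj))
          (fun i hi j hj k hk => hultra' i (hCsub hi) j (hCsub hj) k (hCsub hk))

section mOfFacts
variable {g : ℝ → ℝ} (hpos : ∀ t ∈ Icc (0 : ℝ) 1, 0 ≤ g t)

lemma mOf_eq_uIcc (g : ℝ → ℝ) (s t : ℝ) : mOf g s t = sInf (g '' uIcc s t) := rfl

lemma mOf_comm (g : ℝ → ℝ) (s t : ℝ) : mOf g s t = mOf g t s := by
  rw [mOf, mOf, min_comm, max_comm]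

include hpos in
lemma img_lb {a b : ℝ} (ha : a ∈ Icc (0:ℝ) 1) (hb : b ∈ Icc (0:ℝ) 1) :
    ∀ x ∈ g '' uIcc a b, 0 ≤ x := by
  rintro x ⟨r, hr, rfl⟩
  exact hpos r (uIcc_subset_Icc ha hb hr)

include hpos in
lemma img_bdd {a b : ℝ} (ha : a ∈ Icc (0:ℝ) 1) (hb : b ∈ Icc (0:ℝ) 1) :
    BddBelow (g '' uIcc a b) :=
  ⟨0, fun x hx => img_lb hpos ha hb x hx⟩

include hpos in
lemma mOf_nonneg {a b : ℝ} (ha : a ∈ Icc (0:ℝ) 1) (hb : b ∈ Icc (0:ℝ) 1) :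
    0 ≤ mOf g a b :=
  Real.sInf_nonneg (img_lb hpos ha hb)

lemma mOf_self (g : ℝ → ℝ) (a : ℝ) : mOf g a a = g a := by
  rw [mOf, min_self, max_self, Set.Icc_self, Set.image_singleton, csInf_singleton]

include hpos in
lemma mOf_le_left {a b : ℝ} (ha : a ∈ Icc (0:ℝ) 1) (hb : b ∈ Icc (0:ℝ) 1) :
    mOf g a b ≤ g a := by
  rw [mOf_eq_uIcc]
  exact csInf_le (img_bdd hpos ha hb) ⟨a, left_mem_uIcc, rfl⟩

include hpos in
lemma mOf_ultra {a b k : ℝ} (ha : a ∈ Icc (0:ℝ) 1) (hb : b ∈ Icc (0:ℝ) 1)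
    (hk : k ∈ Icc (0:ℝ) 1) :
    min (mOf g a k) (mOf g k b) ≤ mOf g a b := by
  rw [mOf_eq_uIcc g a b]
  refine le_csInf ⟨g a, ⟨a, left_mem_uIcc, rfl⟩⟩ ?_
  rintro x ⟨r, hr, rfl⟩
  rcases Set.uIcc_subset_uIcc_union_uIcc (b := k) hr with h | h
  · exact le_trans (min_le_left _ _)
      (csInf_le (img_bdd hpos ha hk) ⟨r, h, rfl⟩)
  · exact le_trans (min_le_right _ _)
      (csInf_le (img_bdd hpos hk hb) ⟨r, h, rfl⟩)

end mOfFacts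

/-- For a continuous `g : [0,1] → [0,∞)`, the kernel `m_g` is nonnegative definite:
for all `n ≥ 1`, `s₁, ..., s_n ∈ [0,1]` and `λ₁, ..., λ_n ∈ ℝ`,
`∑_{i,j} λ_i λ_j m_g(s_i, s_j) ≥ 0`. -/
theorem mOf_nonneg_definite (g : ℝ → ℝ)
    (hcont : ContinuousOn g (Icc 0 1)) (hpos : ∀ t ∈ Icc (0 : ℝ) 1, 0 ≤ g t)
    (n : ℕ) (hn : 1 ≤ n) (s : Fin n → ℝ) (hs : ∀ i, s i ∈ Icc (0 : ℝ) 1)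
    (l : Fin n → ℝ) :
    0 ≤ ∑ i : Fin n, ∑ j : Fin n, l i * l j * mOf g (s i) (s j) := by
  have := quad_nonneg l (Finset.univ : Finset (Fin n)).card Finset.univ le_rfl
    (fun i j => mOf g (s i) (s j))
    (fun i _ j _ => mOf_comm g (s i) (s j))
    (fun i _ j _ => mOf_nonneg hpos (hs i) (hs j))
    (fun i _ j _ => by
      show mOf g (s i) (s j) ≤ mOf g (s i) (s i)
      rw [mOf_self]
      exact mOf_le_left hpos (hs i) (hs j))
    (fun i _ j _ k _ => mOf_ultra hpos (hs i) (hs j) (hs k))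
  simpa using this
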